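/- Define f(ρ) = D / (B · J · log(1 + h / (g(ρ) + N))) where g(ρ) = Σ_{ℓ} ρ_ℓ · h_ℓ with D > 0, B > 0, J > 0, h > 0, N > 0, and h_ℓ ≥ 0, and ρ a nonnegative vector. Then f is scalable: for every α > 1, α · f(ρ) > f(α·ρ). -/
import Mathlib

theorem stmt_4 {n : ℕ} (D B J h N : ℝ) (hD : 0 < D) (hB : 0 < B) (hJ : 0 < J)
    (hh : 0 < h) (hN : 0 < N) (hc : Fin n → ℝ) (hhc : ∀ ℓ, 0 ≤ hc ℓ)
    (f : (Fin n → ℝ) → ℝ)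
    (hf : ∀ ρ : Fin n → ℝ,
      f ρ = D / (B * J * Real.log (1 + h / ((∑ ℓ, ρ ℓ * hc ℓ) + N))))
    (ρ : Fin n → ℝ) (hρ : ∀ ℓ, 0 ≤ ρ ℓ) (α : ℝ) (hα : 1 < α) :
    α * f ρ > f (fun ℓ => α * ρ ℓ) := by
  rw [hf, hf]
  set x := ∑ ℓ, ρ ℓ * hc ℓ with hx
  have hx0 : 0 ≤ x := Finset.sum_nonneg fun ℓ _ => mul_nonneg (hρ ℓ) (hhc ℓ)
  have hsum : (∑ ℓ, (α * ρ ℓ) * hc ℓ) = α * x := by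
    rw [hx, Finset.mul_sum]
    exact Finset.sum_congr rfl fun ℓ _ => by ring
  simp only [hsum]
  have hN1 : 0 < x + N := by linarith
  have hN2 : 0 < α * x + N := by nlinarith
  have hs : 0 < h / (α * x + N) := div_pos hh hN2
  have hstep : 1 + h / (x + N) < 1 + α * (h / (α * x + N)) := by
    have : h / (x + N) < α * (h / (α * x + N)) := by
      rw [mul_div_assoc', div_lt_div_iff₀ hN1 hN2]
      nlinarith [mul_pos (mul_pos (sub_pos.mpr hα) hh) hN]
    linarith
  have hbern : 1 + α * (h / (α * x + N)) ≤ (1 + h / (α * x + N)) ^ α :=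
    one_add_mul_self_le_rpow_one_add (by linarith) hα.le
  have hlog : Real.log (1 + h / (x + N)) < α * Real.log (1 + h / (α * x + N)) := by
    rw [← Real.log_rpow (by linarith)]
    exact Real.log_lt_log (by positivity) (lt_of_lt_of_le hstep hbern)
  have hL1 : 0 < Real.log (1 + h / (x + N)) :=
    Real.log_pos (by have := div_pos hh hN1; linarith)
  have hL2 : 0 < Real.log (1 + h / (α * x + N)) :=
    Real.log_pos (by linarith)
  rw [gt_iff_lt, mul_div_assoc', div_lt_div_iff₀ (by positivity) (by positivity)]
  nlinarith [mul_pos hB hJ, mul_pos hD (mul_pos hB hJ)]
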